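/- Let X_1,…,X_N ∈ M_d span a linear subspace S = span{X_i} ⊆ M_d, and let T : S → M_{d'} be a linear map. Then T is completely positive if and only if for all matrices H_1,…,H_N ∈ M_{d'}, the implication holds: if Σ_{i=1}^N X_i ⊗ H_i is positive semidefinite, then Σ_{i=1}^N tr[T(X_i)^T H_i] ≥ 0 (in particular this sum is real). -/

import Mathlib

open scoped Kronecker ComplexOrder Matrix.Norms.L2Operator
open Matrix Filter Classical

/-- `M_d`, the algebra of `d × d` complex matrices. -/
abbrev Mat (d : ℕ) := Matrix (Fin d) (Fin d) ℂ

/-- A linear map `T : S → M_{d'}` on a subspace `S ⊆ M_d` is completely positive if for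
every `n` and every positive semidefinite `P = Σ_j X_j ⊗ K_j` with `X_j ∈ S`, `K_j ∈ M_n`,
the matrix `(T ⊗ id_n)(P) = Σ_j T(X_j) ⊗ K_j` is positive semidefinite. -/
def IsCPOn {d d' : ℕ} (S : Submodule ℂ (Mat d)) (T : S →ₗ[ℂ] Mat d') : Prop :=
  ∀ (n m : ℕ) (X : Fin m → S) (K : Fin m → Matrix (Fin n) (Fin n) ℂ),
    (∑ j, (X j : Mat d) ⊗ₖ K j).PosSemidef →
    (∑ j, (T (X j)) ⊗ₖ K j).PosSemidef

/-- Complete positivity for a linear map defined on all of `M_d`. -/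
def IsCP {d d' : ℕ} (T : Mat d →ₗ[ℂ] Mat d') : Prop :=
  ∀ (n m : ℕ) (X : Fin m → Mat d) (K : Fin m → Matrix (Fin n) (Fin n) ℂ),
    (∑ j, X j ⊗ₖ K j).PosSemidef →
    (∑ j, T (X j) ⊗ₖ K j).PosSemidef

/-- Quadratic form of a Kronecker product, as a trace. -/
lemma quad_kron {p n : ℕ} (A : Matrix (Fin p) (Fin p) ℂ) (B : Matrix (Fin n) (Fin n) ℂ)
    (v : Fin p × Fin n → ℂ) :
    star v ⬝ᵥ ((A ⊗ₖ B) *ᵥ v) =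
      (Aᵀ * ((Matrix.of fun b a => v (a, b))ᴴ * B * (Matrix.of fun b a => v (a, b)))).trace := by
  simp only [dotProduct, mulVec, trace, diag_apply, Matrix.mul_apply, conjTranspose_apply,
    kroneckerMap_apply, transpose_apply, Pi.star_apply, of_apply, Fintype.sum_prod_type,
    Finset.mul_sum, Finset.sum_mul]
  conv_rhs => rw [Finset.sum_comm]
  refine Finset.sum_congr rfl fun a _ => ?_
  conv_rhs => enter [2, a']; rw [Finset.sum_comm]
  conv_rhs => rw [Finset.sum_comm]
  refine Finset.sum_congr rfl fun b _ => Finset.sum_congr rfl fun a' _ =>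
    Finset.sum_congr rfl fun b' _ => ?_
  ring

/-- A complex matrix with nonnegative quadratic form is Hermitian. -/
lemma isHermitian_of_nonneg {m : Type*} [Fintype m] [DecidableEq m] (M : Matrix m m ℂ)
    (h : ∀ x, 0 ≤ star x ⬝ᵥ M *ᵥ x) : M.IsHermitian := by
  rw [isHermitian_iff_isSymmetric, LinearMap.isSymmetric_iff_inner_map_self_real]
  intro v
  set x : m → ℂ := WithLp.equiv 2 (m → ℂ) v with hx
  have hq := h x
  have hreal : (starRingEnd ℂ) (star x ⬝ᵥ M *ᵥ x) = star x ⬝ᵥ M *ᵥ x := by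
    rw [Complex.conj_eq_iff_im]
    exact ((Complex.le_def).mp hq).2.symm
  have hinner : (inner ℂ ((Matrix.toEuclideanLin M) v) v : ℂ) =
      (starRingEnd ℂ) (star x ⬝ᵥ M *ᵥ x) := by
    rw [EuclideanSpace.inner_eq_star_dotProduct]
    simp [hx, dotProduct, mulVec, Finset.mul_sum, map_sum, mul_comm, mul_left_comm]
  rw [hinner, hreal, hreal]

lemma posSemidef_of_nonneg {m : Type*} [Fintype m] [DecidableEq m] (M : Matrix m m ℂ)
    (h : ∀ x, 0 ≤ star x ⬝ᵥ M *ᵥ x) : M.PosSemidef :=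
  PosSemidef.of_dotProduct_mulVec_nonneg (isHermitian_of_nonneg M h) h

lemma kron_conjTranspose {l m n p : Type*} (A : Matrix l m ℂ) (B : Matrix n p ℂ) :
    (A ⊗ₖ B)ᴴ = Aᴴ ⊗ₖ Bᴴ := by
  ext ⟨i, j⟩ ⟨k, l⟩
  simp [conjTranspose_apply, kroneckerMap_apply, mul_comm]

lemma kron_sum_right {l m n p ι : Type*} (s : Finset ι) (A : Matrix l m ℂ)
    (B : ι → Matrix n p ℂ) : A ⊗ₖ (∑ j ∈ s, B j) = ∑ j ∈ s, A ⊗ₖ B j := by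
  ext ⟨i, j⟩ ⟨k, l⟩
  simp [kroneckerMap_apply, Matrix.sum_apply, Finset.mul_sum]

lemma sum_kron_left {l m n p ι : Type*} (s : Finset ι) (A : ι → Matrix l m ℂ)
    (B : Matrix n p ℂ) : (∑ j ∈ s, A j) ⊗ₖ B = ∑ j ∈ s, A j ⊗ₖ B := by
  ext ⟨i, j⟩ ⟨k, l⟩
  simp [kroneckerMap_apply, Matrix.sum_apply, Finset.sum_mul]


lemma quad_sum {κ ι : Type*} [Fintype κ] [Fintype ι] (M : ι → Matrix κ κ ℂ) (v : κ → ℂ) :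
    star v ⬝ᵥ ((∑ i, M i) *ᵥ v) = ∑ i, star v ⬝ᵥ (M i *ᵥ v) := by
  simp only [dotProduct, mulVec, Matrix.sum_apply, Finset.sum_apply, Finset.mul_sum,
    Finset.sum_mul]
  conv_lhs => enter [2, k]; rw [Finset.sum_comm]
  conv_lhs => rw [Finset.sum_comm]

/-- `T` is completely positive on `S = span{X_i}` iff for all `H_i`,
`Σ_i X_i ⊗ H_i ⪰ 0` implies `Σ_i tr[T(X_i)ᵀ H_i] ≥ 0` (in particular the sum is real,
expressed via the complex order). -/
theorem stmt1 {d d' N : ℕ} (X : Fin N → Mat d)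
    (S : Submodule ℂ (Mat d)) (hS : S = Submodule.span ℂ (Set.range X))
    (hmem : ∀ i, X i ∈ S)
    (T : S →ₗ[ℂ] Mat d') :
    IsCPOn S T ↔
      ∀ H : Fin N → Mat d',
        (∑ i, X i ⊗ₖ H i).PosSemidef →
        0 ≤ ∑ i, ((T ⟨X i, hmem i⟩)ᵀ * H i).trace := by
  constructor
  · -- CP implies the trace condition
    intro hCP H hH
    have hPSD : (∑ i, (T ⟨X i, hmem i⟩) ⊗ₖ H i).PosSemidef :=
      hCP d' N (fun i => ⟨X i, hmem i⟩) H hH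
    set w : Fin d' × Fin d' → ℂ := fun q => if q.1 = q.2 then 1 else 0 with hw
    have key := hPSD.dotProduct_mulVec_nonneg w
    have hV : (Matrix.of fun b a => w (a, b)) = (1 : Mat d') := by
      ext b a
      simp [hw, one_apply, eq_comm]
    have hquad : star w ⬝ᵥ ((∑ i, (T ⟨X i, hmem i⟩) ⊗ₖ H i) *ᵥ w) =
        ∑ i, ((T ⟨X i, hmem i⟩)ᵀ * H i).trace := by
      rw [quad_sum]
      refine Finset.sum_congr rfl fun i _ => ?_
      rw [quad_kron, hV]
      simp
    rwa [hquad] at key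
  · -- the trace condition implies CP
    intro hdual n m X' K hP
    -- decompose each `X' j` in terms of the `X i`
    have hex : ∀ j, ∃ c : Fin N → ℂ, ∑ i, c i • X i = (X' j : Mat d) := by
      intro j
      have hj : (X' j : Mat d) ∈ Submodule.span ℂ (Set.range X) := by
        rw [← hS]; exact (X' j).2
      exact (Submodule.mem_span_range_iff_exists_fun ℂ).mp hj
    choose c hc using hex
    have hTX : ∀ j, T (X' j) = ∑ i, c j i • T ⟨X i, hmem i⟩ := by
      intro j
      have hXj : X' j = ∑ i, c j i • (⟨X i, hmem i⟩ : S) := by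
        apply Subtype.ext
        push_cast
        exact (hc j).symm
      rw [hXj, map_sum]
      exact Finset.sum_congr rfl fun i _ => LinearMap.map_smul T (c j i) ⟨X i, hmem i⟩
    set K' : Fin N → Matrix (Fin n) (Fin n) ℂ := fun i => ∑ j, c j i • K j with hK'
    -- rewrite both sums over `j` as sums over `i`
    have hQ : ∑ j, T (X' j) ⊗ₖ K j = ∑ i, T ⟨X i, hmem i⟩ ⊗ₖ K' i := by
      calc ∑ j, T (X' j) ⊗ₖ K j
          = ∑ j, ∑ i, (c j i • T ⟨X i, hmem i⟩) ⊗ₖ K j := by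
            refine Finset.sum_congr rfl fun j _ => ?_
            rw [hTX j, sum_kron_left]
        _ = ∑ i, ∑ j, c j i • (T ⟨X i, hmem i⟩ ⊗ₖ K j) := by
            rw [Finset.sum_comm]
            exact Finset.sum_congr rfl fun i _ => Finset.sum_congr rfl fun j _ => by
              rw [smul_kronecker]
        _ = ∑ i, T ⟨X i, hmem i⟩ ⊗ₖ K' i := by
            refine Finset.sum_congr rfl fun i _ => ?_
            simp only [hK']
            rw [kron_sum_right]
            exact Finset.sum_congr rfl fun j _ => by rw [kronecker_smul]
    have hP' : ∑ j, (X' j : Mat d) ⊗ₖ K j = ∑ i, X i ⊗ₖ K' i := by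
      calc ∑ j, (X' j : Mat d) ⊗ₖ K j
          = ∑ j, ∑ i, (c j i • X i) ⊗ₖ K j := by
            refine Finset.sum_congr rfl fun j _ => ?_
            rw [← hc j, sum_kron_left]
        _ = ∑ i, ∑ j, c j i • (X i ⊗ₖ K j) := by
            rw [Finset.sum_comm]
            exact Finset.sum_congr rfl fun i _ => Finset.sum_congr rfl fun j _ => by
              rw [smul_kronecker]
        _ = ∑ i, X i ⊗ₖ K' i := by
            refine Finset.sum_congr rfl fun i _ => ?_
            simp only [hK']
            rw [kron_sum_right]
            exact Finset.sum_congr rfl fun j _ => by rw [kronecker_smul]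
    rw [hQ]
    rw [hP'] at hP
    refine posSemidef_of_nonneg _ fun v => ?_
    set V : Matrix (Fin n) (Fin d') ℂ := Matrix.of fun b a => v (a, b) with hVdef
    set H : Fin N → Mat d' := fun i => Vᴴ * K' i * V with hH
    have hcong : ∑ i, X i ⊗ₖ H i =
        ((1 : Mat d) ⊗ₖ V)ᴴ * (∑ i, X i ⊗ₖ K' i) * ((1 : Mat d) ⊗ₖ V) := by
      rw [Matrix.mul_sum, Matrix.sum_mul]
      refine Finset.sum_congr rfl fun i _ => ?_
      rw [kron_conjTranspose, ← mul_kronecker_mul, ← mul_kronecker_mul, conjTranspose_one,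
        one_mul, mul_one]
    have hHP : (∑ i, X i ⊗ₖ H i).PosSemidef := by
      rw [hcong]
      exact hP.conjTranspose_mul_mul_same _
    have key := hdual H hHP
    have hquad : star v ⬝ᵥ ((∑ i, T ⟨X i, hmem i⟩ ⊗ₖ K' i) *ᵥ v) =
        ∑ i, ((T ⟨X i, hmem i⟩)ᵀ * H i).trace := by
      rw [quad_sum]
      refine Finset.sum_congr rfl fun i _ => ?_
      rw [quad_kron]
    rwa [hquad]
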